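/- For every positive integer k and every real x > 0, x · (d/dx)^k [x^{k-1} F(x)] = -x·k! ∫_0^∞ e^{-t} t^{k-1}/(t+x)^{k+1} dt; in particular it is strictly negative. -/

import Mathlib

open MeasureTheory Real Set Filter Polynomial

noncomputable def F (x : ℝ) : ℝ := ∫ t in Set.Ioi (0:ℝ), Real.exp (-t) / (t + x)


lemma meas_aux (c m : ℕ) (x : ℝ) :
    Measurable (fun t : ℝ => Real.exp (-t) * t ^ c / (t + x) ^ m) :=
  ((Real.measurable_exp.comp measurable_neg).mul (measurable_id.pow_const c)).div
    ((measurable_id.add_const x).pow_const m)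

lemma gamma_int (c : ℕ) :
    IntegrableOn (fun t : ℝ => Real.exp (-t) * t ^ c) (Set.Ioi 0) := by
  have h := Real.GammaIntegral_convergent (s := (c : ℝ) + 1) (by positivity)
  refine h.congr_fun (fun t ht => ?_) measurableSet_Ioi
  rw [add_sub_cancel_right]
  beta_reduce
  rw [Real.rpow_natCast]

noncomputable def Jfun (c m : ℕ) (x : ℝ) : ℝ :=
  ∫ t in Set.Ioi (0:ℝ), Real.exp (-t) * t ^ c / (t + x) ^ m

lemma J_int (c m : ℕ) {x : ℝ} (hx : 0 < x) :
    IntegrableOn (fun t : ℝ => Real.exp (-t) * t ^ c / (t + x) ^ m) (Set.Ioi 0) := by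
  refine Integrable.mono ((gamma_int c).const_mul (x ^ m)⁻¹)
    (meas_aux c m x).aestronglyMeasurable.restrict ?_
  filter_upwards [ae_restrict_mem measurableSet_Ioi] with t ht
  have ht0 : (0:ℝ) < t := ht
  have hpos : (0:ℝ) < (t + x) ^ m := by positivity
  rw [Real.norm_eq_abs, Real.norm_eq_abs, abs_of_nonneg (by positivity),
    abs_of_nonneg (by positivity), div_eq_inv_mul]
  gcongr
  linarith

lemma J_deriv (c m : ℕ) (hm : 1 ≤ m) {x : ℝ} (hx : 0 < x) :
    HasDerivAt (Jfun c m) (-(m : ℝ) * Jfun c (m + 1) x) x := by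
  have hε : (0:ℝ) < x / 2 := by linarith
  have key := hasDerivAt_integral_of_dominated_loc_of_deriv_le
    (μ := volume.restrict (Set.Ioi 0)) (x₀ := x)
    (F := fun y t => Real.exp (-t) * t ^ c / (t + y) ^ m)
    (F' := fun y t => -(m : ℝ) * (Real.exp (-t) * t ^ c / (t + y) ^ (m + 1)))
    (bound := fun t => (m : ℝ) / (x / 2) ^ (m + 1) * (Real.exp (-t) * t ^ c))
    (Metric.ball_mem_nhds x hε)
    (Filter.Eventually.of_forall fun y => (meas_aux c m y).aestronglyMeasurable.restrict)
    (J_int c m hx)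
    ((((meas_aux c (m+1) x).const_mul (-(m:ℝ))).aestronglyMeasurable.restrict))
    ?_ (((gamma_int c).const_mul _)) ?_
  · have heq : (∫ t in Set.Ioi (0:ℝ),
        -(m : ℝ) * (Real.exp (-t) * t ^ c / (t + x) ^ (m + 1)))
        = -(m : ℝ) * Jfun c (m + 1) x := integral_const_mul _ _
    rw [heq] at key
    exact key.2
  · filter_upwards [ae_restrict_mem measurableSet_Ioi] with t ht
    intro y hy
    have ht0 : (0:ℝ) < t := ht
    have hy2 : x / 2 < y := by
      have := abs_lt.mp (mem_ball_iff_norm.mp hy)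
      linarith [this.1]
    have hty : (0:ℝ) < t + y := by linarith
    rw [neg_mul, norm_neg, Real.norm_eq_abs, abs_of_nonneg (by positivity)]
    calc (m:ℝ) * (Real.exp (-t) * t ^ c / (t + y) ^ (m + 1))
        = ((m:ℝ) * (Real.exp (-t) * t ^ c)) / (t + y) ^ (m + 1) := by ring
      _ ≤ ((m:ℝ) * (Real.exp (-t) * t ^ c)) / (x / 2) ^ (m + 1) := by
          gcongr
          linarith
      _ = (m : ℝ) / (x / 2) ^ (m + 1) * (Real.exp (-t) * t ^ c) := by ring
  · filter_upwards [ae_restrict_mem measurableSet_Ioi] with t ht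
    intro y hy
    have ht0 : (0:ℝ) < t := ht
    have hy2 : x / 2 < y := by
      have := abs_lt.mp (mem_ball_iff_norm.mp hy)
      linarith [this.1]
    have hty : (0:ℝ) < t + y := by linarith
    have h1 : HasDerivAt (fun y : ℝ => t + y) 1 y := by
      simpa using (hasDerivAt_id y).const_add t
    have h2 : HasDerivAt (fun y : ℝ => (t + y) ^ m)
        ((m : ℝ) * (t + y) ^ (m - 1) * 1) y := h1.pow m
    have h3 := (h2.inv (by positivity)).const_mul (Real.exp (-t) * t ^ c)
    refine h3.congr_deriv ?_
    have hsplit : ((t + y) ^ m) ^ 2 = (t + y) ^ (m - 1) * (t + y) ^ (m + 1) := by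
      rw [← pow_mul, ← pow_add]; congr 1; omega
    have hA : (t+y)^(m-1) ≠ 0 := by positivity
    have hB : (t+y)^(m+1) ≠ 0 := by positivity
    rw [mul_one, hsplit]
    field_simp

lemma J_pos (c m : ℕ) {x : ℝ} (hx : 0 < x) : 0 < Jfun c m x := by
  rw [Jfun, MeasureTheory.setIntegral_pos_iff_support_of_nonneg_ae]
  · refine lt_of_lt_of_le ?_ (measure_mono (?_ : Set.Ioi (1:ℝ) ⊆ _))
    · simp [Real.volume_Ioi]
    · intro t ht
      have ht1 : (1:ℝ) < t := ht
      constructor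
      · simp only [Function.mem_support]
        positivity
      · exact lt_trans one_pos ht1
  · filter_upwards [ae_restrict_mem measurableSet_Ioi] with t ht
    have ht0 : (0:ℝ) < t := ht
    positivity
  · exact J_int c m hx


noncomputable def coefA (i : ℕ) : ℝ := (-1:ℝ)^i * ∫ t in Set.Ioi (0:ℝ), Real.exp (-t) * t ^ i

noncomputable def polyP (c : ℕ) : Polynomial ℝ :=
  ∑ i ∈ Finset.range c, Polynomial.C (coefA i) * Polynomial.X ^ (c - 1 - i)

lemma itd_poly (n : ℕ) (p : Polynomial ℝ) :
    iteratedDeriv n (fun y : ℝ => p.eval y) = fun y => (Polynomial.derivative^[n] p).eval y := by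
  induction n with
  | zero => simp
  | succ n ih =>
    rw [iteratedDeriv_succ, ih]
    funext y
    have hit : (Polynomial.derivative^[n+1] p) = Polynomial.derivative (Polynomial.derivative^[n] p) :=
      Function.iterate_succ_apply' _ _ _
    rw [hit]
    exact Polynomial.deriv (p := Polynomial.derivative^[n] p)

lemma base_decomp (c : ℕ) {x : ℝ} (hx : 0 < x) :
    x ^ c * F x = (polyP c).eval x + (-1:ℝ)^c * Jfun c 1 x := by
  have hxt : ∀ t : ℝ, t ∈ Set.Ioi (0:ℝ) → t + x ≠ 0 := fun t ht => by
    have : (0:ℝ) < t := ht; positivity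
  have hstep : x ^ c * F x = ∫ t in Set.Ioi (0:ℝ),
      ((∑ i ∈ Finset.range c, ((-1:ℝ)^i * x^(c-1-i)) * (Real.exp (-t) * t^i))
        + (-1:ℝ)^c * (Real.exp (-t) * t^c / (t+x)^1)) := by
    rw [F, ← integral_const_mul]
    refine setIntegral_congr_fun measurableSet_Ioi (fun t ht => ?_)
    have ht0 : (0:ℝ) < t := ht
    have hne : t + x ≠ 0 := by positivity
    have halg : x ^ c = (∑ i ∈ Finset.range c, (-t)^i * x^(c-1-i)) * (t + x)
        + (-1:ℝ)^c * t^c := by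
      have hgs := geom_sum₂_mul (-t) x c
      have hnp : (-t)^c = (-1:ℝ)^c * t^c := by rw [neg_pow]
      linear_combination hgs + hnp
    have h2 : (∑ i ∈ Finset.range c, ((-1:ℝ)^i * x^(c-1-i)) * (Real.exp (-t) * t^i))
        = Real.exp (-t) * ∑ i ∈ Finset.range c, (-t)^i * x^(c-1-i) := by
      rw [Finset.mul_sum]
      exact Finset.sum_congr rfl fun i _ => by rw [neg_pow]; ring
    rw [h2, pow_one]
    field_simp
    linear_combination halg
  rw [hstep]
  have hInt1 : Integrable (fun t : ℝ => ∑ i ∈ Finset.range c,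
      ((-1:ℝ)^i * x^(c-1-i)) * (Real.exp (-t) * t^i)) (volume.restrict (Set.Ioi 0)) :=
    integrable_finset_sum _ (fun i _ => ((gamma_int i).const_mul _))
  have hInt2 : Integrable (fun t : ℝ => (-1:ℝ)^c * (Real.exp (-t) * t^c / (t+x)^1))
      (volume.restrict (Set.Ioi 0)) := (J_int c 1 hx).const_mul _
  rw [integral_add hInt1 hInt2, integral_finset_sum _ (fun i _ => ((gamma_int i).const_mul _)),
    integral_const_mul]
  congr 1
  · rw [polyP, Polynomial.eval_finset_sum]
    refine Finset.sum_congr rfl fun i _ => ?_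
    rw [integral_const_mul, coefA]
    simp only [Polynomial.eval_mul, Polynomial.eval_C, Polynomial.eval_pow, Polynomial.eval_X]
    ring

lemma main_ind (c n : ℕ) {x : ℝ} (hx : 0 < x) :
    iteratedDeriv n (fun y => y ^ c * F y) x =
      ((Polynomial.derivative^[n] (polyP c)).eval x)
        + (-1:ℝ)^c * ((-1)^n * n.factorial * Jfun c (n+1) x) := by
  induction n generalizing x with
  | zero =>
    simpa using base_decomp c hx
  | succ n ih =>
    rw [iteratedDeriv_succ]
    have hev : iteratedDeriv n (fun y => y ^ c * F y) =ᶠ[nhds x]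
        fun y => ((Polynomial.derivative^[n] (polyP c)).eval y)
          + (-1:ℝ)^c * ((-1)^n * n.factorial * Jfun c (n+1) y) :=
      eventually_of_mem (Ioi_mem_nhds hx) (fun y hy => ih hy)
    rw [hev.deriv_eq]
    have hPd : HasDerivAt (fun y : ℝ => (Polynomial.derivative^[n] (polyP c)).eval y)
        ((Polynomial.derivative^[n+1] (polyP c)).eval x) x := by
      have h := Polynomial.hasDerivAt (Polynomial.derivative^[n] (polyP c)) x
      have hit : (Polynomial.derivative^[n+1] (polyP c))
          = Polynomial.derivative (Polynomial.derivative^[n] (polyP c)) :=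
        Function.iterate_succ_apply' _ _ _
      rw [hit]
      exact h
    have hJ : HasDerivAt (Jfun c (n+1)) (-((n:ℝ)+1) * Jfun c (n+2) x) x := by
      have := J_deriv c (n+1) (by omega) hx
      push_cast at this
      exact this
    have hsum := hPd.add ((hJ.const_mul ((-1:ℝ)^n * n.factorial)).const_mul ((-1:ℝ)^c))
    rw [HasDerivAt.deriv (f := fun y => ((Polynomial.derivative^[n] (polyP c)).eval y)
      + (-1:ℝ)^c * ((-1)^n * n.factorial * Jfun c (n+1) y)) hsum]
    have : (n+2) = (n+1) + 1 := rfl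
    congr 1
    push_cast [Nat.factorial_succ]
    ring

theorem stmt_5 (k : ℕ) (hk : 1 ≤ k) (x : ℝ) (hx : 0 < x) :
    x * iteratedDeriv k (fun y => y ^ (k - 1) * F y) x =
      -(x * (Nat.factorial k) *
        ∫ t in Set.Ioi (0:ℝ), Real.exp (-t) * t ^ (k - 1) / (t + x) ^ (k + 1)) ∧
    x * iteratedDeriv k (fun y => y ^ (k - 1) * F y) x < 0 := by
  obtain ⟨c, rfl⟩ : ∃ c, k = c + 1 := ⟨k - 1, by omega⟩
  simp only [Nat.add_sub_cancel]
  have hmain := main_ind c (c+1) hx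
  have hdeg : (polyP c).natDegree < c + 1 := by
    refine Nat.lt_succ_of_le (Polynomial.natDegree_sum_le_of_forall_le _ _ fun i _ => ?_)
    exact le_trans (Polynomial.natDegree_C_mul_X_pow_le _ _) (by omega)
  have hzero : (Polynomial.derivative^[c+1] (polyP c)) = 0 :=
    Polynomial.iterate_derivative_eq_zero hdeg
  rw [hzero] at hmain
  simp only [Polynomial.eval_zero, zero_add] at hmain
  have hJ := J_pos c (c+2) hx
  have hsign : (-1:ℝ)^c * (-1:ℝ)^(c+1) = -1 := by
    rw [← pow_add]
    exact Odd.neg_one_pow ⟨c, by omega⟩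
  have hJeq : (∫ t in Set.Ioi (0:ℝ), Real.exp (-t) * t ^ c / (t + x) ^ (c + 1 + 1))
      = Jfun c (c+2) x := rfl
  have hEq : x * iteratedDeriv (c+1) (fun y => y ^ c * F y) x
      = -(x * ((c+1).factorial : ℝ) * Jfun c (c+2) x) := by
    rw [hmain]
    linear_combination (x * (((c+1).factorial : ℝ)) * Jfun c (c+2) x) * hsign
  have hf : (0:ℝ) < ((c+1).factorial : ℝ) := by exact_mod_cast (c+1).factorial_pos
  refine ⟨by rw [hEq, hJeq], ?_⟩
  rw [hEq]
  have h1 : 0 < x * ((c+1).factorial : ℝ) * Jfun c (c+2) x := by positivity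
  linarith
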